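/- Let p be a prime number, let t be a positive integer, and let k_1, …, k_t and w_1, …, w_t be positive integers such that p does not divide k_j for any j. Suppose that p divides the numerator of the rational number ∑_{j=1}^t k_j / w_j (written in lowest terms). Then there exist integers φ_1, …, φ_t with φ_j ≡ 1 (mod p) for every j such that ∑_{j=1}^t k_j · φ_j / w_j = 0 in ℚ. -/

import Mathlib

/-- If `p` is a prime not dividing any of the positive integers `k j`, and `p`
divides the numerator (in lowest terms) of `∑ j, k j / w j`, then there are integers `φ j`
congruent to `1` mod `p` with `∑ j, k j * φ j / w j = 0` in `ℚ`. -/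
theorem exists_cong_one_sum_eq_zero
    (p : ℕ) (hp : p.Prime) (t : ℕ) (ht : 0 < t)
    (k w : Fin t → ℕ) (hk : ∀ j, 0 < k j) (hw : ∀ j, 0 < w j)
    (hpk : ∀ j, ¬ (p ∣ k j))
    (hnum : (p : ℤ) ∣ (∑ j, (k j : ℚ) / (w j : ℚ)).num) :
    ∃ φ : Fin t → ℤ, (∀ j, φ j ≡ 1 [ZMOD (p : ℤ)]) ∧
      ∑ j, (k j : ℚ) * (φ j : ℚ) / (w j : ℚ) = 0 := by
  classical
  haveI : Fact p.Prime := ⟨hp⟩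
  set S : ℚ := ∑ j, (k j : ℚ) / (w j : ℚ) with hSdef
  set j0 : Fin t := ⟨0, ht⟩ with hj0
  have hpd : ¬ (p ∣ S.den) := by
    intro h
    have h1 : p ∣ S.num.natAbs := by
      have := Int.natAbs_dvd_natAbs.mpr hnum
      simpa using this
    have hc := S.reduced
    rw [Nat.Coprime] at hc
    exact hp.ne_one (Nat.eq_one_of_dvd_one (hc ▸ Nat.dvd_gcd h1 h))
  set x : ℤ := (S.den : ℤ) * (k j0 : ℤ) with hxdef
  have hpx : ¬ (p : ℤ) ∣ x := by
    intro h
    rcases (Int.Prime.dvd_mul' hp h) with h | h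
    · exact hpd (Int.natCast_dvd_natCast.mp h)
    · exact hpk j0 (Int.natCast_dvd_natCast.mp h)
  have hx0 : ((x : ZMod p)) ≠ 0 := by
    rw [Ne, ZMod.intCast_zmod_eq_zero_iff_dvd]; exact hpx
  set s : ℤ := (((x : ZMod p)⁻¹).val : ℤ) with hsdef
  have hs : ((s : ZMod p)) = (x : ZMod p)⁻¹ := by
    simp [hsdef, ZMod.natCast_val, ZMod.cast_id]
  have hsx : ((s * x : ℤ) : ZMod p) = 1 := by
    push_cast
    rw [hs]
    exact inv_mul_cancel₀ hx0
  have hnum0 : ((S.num : ZMod p)) = 0 := (ZMod.intCast_zmod_eq_zero_iff_dvd _ _).mpr hnum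
  have hd0 : ((S.den : ℚ)) ≠ 0 := by positivity
  have hw0 : ((w j0 : ℚ)) ≠ 0 := by
    exact_mod_cast (hw j0).ne'
  refine ⟨fun j => s * x - (if j = j0 then s * S.num * (w j0 : ℤ) else 0), fun j => ?_, ?_⟩
  · have : (((s * x - (if j = j0 then s * S.num * (w j0 : ℤ) else 0) : ℤ)) : ZMod p)
        = ((1 : ℤ) : ZMod p) := by
      push_cast
      by_cases h : j = j0 <;> simp [h, hnum0] <;>
        · rw [show ((s : ZMod p) * (x : ZMod p)) = ((s * x : ℤ) : ZMod p) by push_cast; ring, hsx]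
    exact (ZMod.intCast_eq_intCast_iff _ _ _).mp this
  · have key : ∀ j, (k j : ℚ) * (((s * x - (if j = j0 then s * S.num * (w j0 : ℤ) else 0) : ℤ)) : ℚ) / (w j : ℚ)
        = ((s * x : ℤ) : ℚ) * ((k j : ℚ) / (w j : ℚ))
          - (if j = j0 then (k j0 : ℚ) * ((s * S.num : ℤ) : ℚ) else 0) := by
      intro j
      by_cases h : j = j0
      · subst h
        simp only [if_pos rfl]
        push_cast
        field_simp
      · simp only [if_neg h]
        push_cast
        ring
    rw [Finset.sum_congr rfl fun j _ => key j, Finset.sum_sub_distrib, ← Finset.mul_sum,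
      Finset.sum_ite_eq' Finset.univ j0]
    simp only [Finset.mem_univ, if_pos, ← hSdef]
    have h2 := Rat.num_div_den S
    rw [div_eq_iff hd0] at h2
    rw [hxdef]
    push_cast [h2]
    ring
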